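/- Let E be the preorder with two objects 0 < 1 viewed as a category (e.g. Fin 2 with its order) and let F : Type u ⥤ E be any functor (a cut of the category of sets). If F is not constant on objects, then for every type X one has F.obj X = 1 if and only if X is nonempty (equivalently, F.obj X = 0 if and only if X is empty). Hence the category of sets has exactly one non-trivial cut. -/

import Mathlib

open CategoryTheory

universe u

/-- The category of sets has exactly one non-trivial cut: any functor
`F : Type u ⥤ Fin 2` (where `Fin 2` carries its order category structure) which is
not constant on objects sends a type to `1` iff it is nonempty, and to `0` iff it
is empty. -/
theorem nontrivial_cut_of_types (F : Type u ⥤ Fin 2)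
    (hF : ¬ ∀ X Y : Type u, F.obj X = F.obj Y) :
    ∀ X : Type u, (F.obj X = 1 ↔ Nonempty X) ∧ (F.obj X = 0 ↔ IsEmpty X) := by
  have le : ∀ {X Y : Type u}, (X → Y) → F.obj X ≤ F.obj Y := fun f => leOfHom (F.map (TypeCat.ofHom f))
  have hne : ∀ X : Type u, Nonempty X → F.obj X = F.obj PUnit := by
    rintro X ⟨x⟩
    exact le_antisymm (le fun _ => PUnit.unit) (le fun _ => x)
  have hemp : ∀ X : Type u, IsEmpty X → F.obj X = F.obj PEmpty := by
    intro X h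
    exact le_antisymm (le fun x => h.elim x) (le fun x => x.elim)
  have key : F.obj PEmpty ≠ F.obj PUnit := by
    intro h
    apply hF
    intro X Y
    have hX := isEmpty_or_nonempty X
    have hY := isEmpty_or_nonempty Y
    rcases hX with hX | hX <;> rcases hY with hY | hY <;>
      first
      | rw [hemp X hX, hemp Y hY]
      | rw [hemp X hX, hne Y hY, h]
      | rw [hne X hX, hemp Y hY, h]
      | rw [hne X hX, hne Y hY]
  have hle : F.obj PEmpty ≤ F.obj PUnit := le fun x => x.elim
  have h01 : F.obj PEmpty = 0 ∧ F.obj PUnit = 1 := by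
    revert key hle
    generalize F.obj PEmpty = a
    generalize F.obj PUnit = b
    revert a b
    decide
  intro X
  constructor
  · constructor
    · intro h1
      by_contra hn
      have : IsEmpty X := not_nonempty_iff.mp hn
      rw [hemp X this, h01.1] at h1
      exact absurd h1 (by decide)
    · intro h1
      rw [hne X h1, h01.2]
  · constructor
    · intro h0
      by_contra hn
      have : Nonempty X := not_isEmpty_iff.mp hn
      rw [hne X this, h01.2] at h0
      exact absurd h0 (by decide)
    · intro h1
      rw [hemp X h1, h01.1]
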